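/- Theorem 3.7: Suppose in addition that G is locally finite (every vertex has only finitely many neighbors). Then the enlargement *G has a hypernode not in its principal galaxy: there exists a sequence x : ℕ → V such that for every vertex v ∈ V and every k ∈ ℕ, the set {n : d(x(n), v) ≤ k} does not belong to ℱ (equivalently, x is not limitedly distant from any constant sequence). -/
import Mathlib

lemma ball_finite {V : Type*} (G : SimpleGraph V) (hG : G.Connected)
    (hlf : ∀ v : V, (G.neighborSet v).Finite) (v₀ : V) :
    ∀ k : ℕ, {u : V | G.dist u v₀ ≤ k}.Finite := by
  intro k
  induction k with
  | zero =>
    apply Set.Finite.subset (Set.finite_singleton v₀)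
    intro u hu
    simp only [Set.mem_setOf_eq, Nat.le_zero] at hu
    simp [(hG u v₀).dist_eq_zero_iff.mp hu]
  | succ k ih =>
    apply Set.Finite.subset (ih.biUnion (fun w _ => (Set.finite_singleton w).union (hlf w)))
    intro u hu
    simp only [Set.mem_setOf_eq] at hu
    obtain ⟨p, hp⟩ := (hG u v₀).exists_walk_length_eq_dist
    cases p with
    | nil =>
      refine Set.mem_biUnion (s := {u | G.dist u v₀ ≤ k}) ?_ (Or.inl rfl)
      simp only [SimpleGraph.Walk.length_nil] at hp
      simp only [Set.mem_setOf_eq]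
      omega
    | cons h q =>
      rename_i w
      have hw : G.dist w v₀ ≤ k := by
        have := SimpleGraph.dist_le q
        simp only [SimpleGraph.Walk.length_cons] at hp
        omega
      exact Set.mem_biUnion hw (Or.inr h.symm)

/-- Theorem 3.7: if the connected infinite graph `G` is locally finite, then the
enlargement `*G` has a hypernode not in its principal galaxy, i.e. a sequence
`x : ℕ → V` that is not limitedly distant from any constant sequence. -/
theorem exists_hypernode_outside_principal_galaxy {V : Type*} [Infinite V]
    (G : SimpleGraph V) (hG : G.Connected)
    (hlf : ∀ v : V, (G.neighborSet v).Finite)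
    (ℱ : Ultrafilter ℕ) (hF : ∀ a : ℕ, ℱ ≠ pure a) :
    ∃ x : ℕ → V, ∀ v : V, ∀ k : ℕ, {n : ℕ | G.dist (x n) v ≤ k} ∉ ℱ := by
  obtain ⟨v₀⟩ := hG.nonempty
  have hx : ∀ n : ℕ, ∃ u : V, n < G.dist u v₀ := by
    intro n
    obtain ⟨u, hu⟩ := (ball_finite G hG hlf v₀ n).infinite_compl.nonempty
    exact ⟨u, by simpa using hu⟩
  choose x hxd using hx
  refine ⟨x, fun v k hmem => ?_⟩
  have hsub : {n : ℕ | G.dist (x n) v ≤ k} ⊆ {n : ℕ | n < k + G.dist v v₀} := by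
    intro n hn
    have h1 := hG.dist_triangle (u := x n) (v := v) (w := v₀)
    have h2 := hxd n
    simp only [Set.mem_setOf_eq] at hn ⊢
    omega
  have hfin : {n : ℕ | n < k + G.dist v v₀}.Finite := Set.finite_Iio _
  obtain ⟨a, _, ha⟩ := Ultrafilter.eq_pure_of_finite_mem (hfin.subset hsub) hmem
  exact hF a ha
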